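/- For every n ≥ r+1 there exist unique real numbers a_{n,r}^0, a_{n,r}^1, …, a_{n,r}^{r+1} with a_{n,r}^0 = 1 such that Q_{n,r}(x) = Σ_{j=0}^{r+1} a_{n,r}^j L_{n-j}^{α+r+1}(x), where L_m^{α+r+1} is the m-th monic Laguerre polynomial with parameter α+r+1. -/

import Mathlib

open Polynomial Filter Finset MeasureTheory Set

namespace LSAux

noncomputable def Ip (β : ℝ) (p q : Polynomial ℝ) : ℝ :=
  ∫ x in Set.Ioi (0:ℝ), p.eval x * q.eval x * x ^ β * Real.exp (-x)

lemma integrable_pow_rpow (β : ℝ) (hβ : -1 < β) (i : ℕ) :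
    IntegrableOn (fun x : ℝ => x ^ i * x ^ β * Real.exp (-x)) (Set.Ioi 0) := by
  have hi : (0:ℝ) ≤ i := Nat.cast_nonneg i
  have hs : (0:ℝ) < β + i + 1 := by linarith
  have h := Real.GammaIntegral_convergent hs
  refine h.congr_fun (fun x hx => ?_) measurableSet_Ioi
  have hx0 : (0:ℝ) < x := hx
  beta_reduce
  rw [show β + (i:ℝ) + 1 - 1 = β + i by ring, Real.rpow_add hx0, Real.rpow_natCast]
  ring

lemma integrable_poly (β : ℝ) (hβ : -1 < β) (p : Polynomial ℝ) :
    IntegrableOn (fun x : ℝ => p.eval x * x ^ β * Real.exp (-x)) (Set.Ioi 0) := by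
  have h2 : IntegrableOn
      (fun x : ℝ => ∑ k ∈ Finset.range (p.natDegree + 1),
        p.coeff k * (x ^ k * x ^ β * Real.exp (-x))) (Set.Ioi 0) :=
    integrable_finset_sum _ fun k _ => (integrable_pow_rpow β hβ k).const_mul _
  refine h2.congr (Filter.Eventually.of_forall fun x => ?_)
  beta_reduce
  rw [Polynomial.eval_eq_sum_range, Finset.sum_mul, Finset.sum_mul]
  exact Finset.sum_congr rfl fun k _ => by ring

lemma integrable_poly2 (β : ℝ) (hβ : -1 < β) (p q : Polynomial ℝ) :
    IntegrableOn (fun x : ℝ => p.eval x * q.eval x * x ^ β * Real.exp (-x)) (Set.Ioi 0) := by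
  refine (integrable_poly β hβ (p * q)).congr (Filter.Eventually.of_forall fun x => ?_)
  beta_reduce
  rw [Polynomial.eval_mul]

lemma Ip_comm (β : ℝ) (p q : Polynomial ℝ) : Ip β p q = Ip β q p := by
  unfold Ip
  exact integral_congr_ae (Filter.Eventually.of_forall fun x => by ring)

lemma Ip_pos (β : ℝ) (hβ : -1 < β) (p : Polynomial ℝ) (hp : p ≠ 0) : 0 < Ip β p p := by
  set f : ℝ → ℝ := fun x => p.eval x * p.eval x * x ^ β * Real.exp (-x) with hf
  have hnn : 0 ≤ᶠ[ae (volume.restrict (Set.Ioi (0:ℝ)))] f := by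
    rw [EventuallyLE, ae_restrict_iff' measurableSet_Ioi]
    refine Filter.Eventually.of_forall fun x hx => ?_
    have hx0 : (0:ℝ) < x := hx
    have h1 : 0 ≤ p.eval x * p.eval x := mul_self_nonneg _
    have h2 : 0 < x ^ β := Real.rpow_pos_of_pos hx0 β
    have h3 : 0 < Real.exp (-x) := Real.exp_pos _
    positivity
  have hint : IntegrableOn f (Set.Ioi 0) := integrable_poly2 β hβ p p
  rw [show Ip β p p = ∫ x in Set.Ioi (0:ℝ), f x from rfl]
  rw [setIntegral_pos_iff_support_of_nonneg_ae hnn hint]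
  have hsub : Set.Ioi (0:ℝ) \ {x | p.IsRoot x} ⊆ Function.support f ∩ Set.Ioi 0 := by
    intro x hx
    rcases hx with ⟨hx1, hx2⟩
    refine ⟨?_, hx1⟩
    have hx0 : (0:ℝ) < x := hx1
    have hpe : p.eval x ≠ 0 := hx2
    simp only [Function.mem_support, hf]
    exact mul_ne_zero (mul_ne_zero (mul_ne_zero hpe hpe)
      (Real.rpow_pos_of_pos hx0 β).ne') (Real.exp_pos _).ne'
  have hz : volume ({x : ℝ | p.IsRoot x}) = 0 :=
    (Polynomial.finite_setOf_isRoot hp).measure_zero _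
  have : volume (Set.Ioi (0:ℝ) \ {x | p.IsRoot x}) = volume (Set.Ioi (0:ℝ)) :=
    measure_diff_null hz
  have hpos : 0 < volume (Set.Ioi (0:ℝ) \ {x | p.IsRoot x}) := by
    rw [this, Real.volume_Ioi]; exact ENNReal.zero_lt_top
  exact lt_of_lt_of_le hpos (measure_mono hsub)

lemma Ip_sub_left (β : ℝ) (hβ : -1 < β) (f g h : Polynomial ℝ) :
    Ip β (f - g) h = Ip β f h - Ip β g h := by
  unfold Ip
  rw [← integral_sub (integrable_poly2 β hβ f h) (integrable_poly2 β hβ g h)]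
  exact integral_congr_ae (Filter.Eventually.of_forall fun x => by
    beta_reduce; rw [Polynomial.eval_sub]; ring)

lemma Ip_sum_right {ι : Type*} (β : ℝ) (hβ : -1 < β) (p : Polynomial ℝ) (s : Finset ι)
    (c : ι → ℝ) (g : ι → Polynomial ℝ) :
    Ip β p (∑ k ∈ s, Polynomial.C (c k) * g k) = ∑ k ∈ s, c k * Ip β p (g k) := by
  unfold Ip
  have h1 : ∀ x : ℝ, p.eval x * (∑ k ∈ s, Polynomial.C (c k) * g k).eval x * x ^ β *
      Real.exp (-x)
      = ∑ k ∈ s, c k * (p.eval x * (g k).eval x * x ^ β * Real.exp (-x)) := by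
    intro x
    rw [Polynomial.eval_finset_sum, Finset.mul_sum, Finset.sum_mul, Finset.sum_mul]
    exact Finset.sum_congr rfl fun k _ => by
      simp only [Polynomial.eval_mul, Polynomial.eval_C]; ring
  rw [integral_congr_ae (Filter.Eventually.of_forall h1),
    integral_finset_sum s (fun k _ => ((integrable_poly2 β hβ p (g k)).const_mul _))]
  exact Finset.sum_congr rfl fun k _ => integral_const_mul _ _

lemma span_monic (T : ℕ → Polynomial ℝ) (hT : ∀ m, (T m).Monic ∧ (T m).natDegree = m) :
    ∀ m : ℕ, ∀ p : Polynomial ℝ, p.degree < (m : WithBot ℕ) →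
      ∃ c : ℕ → ℝ, p = ∑ k ∈ Finset.range m, Polynomial.C (c k) * T k := by
  intro m
  induction m with
  | zero =>
    intro p hp
    have hp0 : p = 0 := by
      rw [← Polynomial.degree_eq_bot, ← Nat.WithBot.lt_zero_iff]
      exact_mod_cast hp
    exact ⟨fun _ => 0, by simp [hp0]⟩
  | succ m IH =>
    intro p hp
    set q := p - Polynomial.C (p.coeff m) * T m with hq
    have hcoeffT : (T m).coeff m = 1 := by
      have h := (hT m).1.coeff_natDegree
      rwa [(hT m).2] at h
    have hqd : q.degree < (m : WithBot ℕ) := by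
      rw [Polynomial.degree_lt_iff_coeff_zero]
      intro k hk
      have hpk : ∀ l, m + 1 ≤ l → p.coeff l = 0 :=
        (Polynomial.degree_lt_iff_coeff_zero p (m + 1)).mp hp
      rcases eq_or_lt_of_le hk with h | h
      · rw [hq, Polynomial.coeff_sub, Polynomial.coeff_C_mul, ← h, hcoeffT, mul_one, sub_self]
      · have h1 : p.coeff k = 0 := hpk k h
        have h2 : (T m).coeff k = 0 :=
          Polynomial.coeff_eq_zero_of_natDegree_lt (by rw [(hT m).2]; exact h)
        rw [hq, Polynomial.coeff_sub, Polynomial.coeff_C_mul, h1, h2, mul_zero, sub_self]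
    obtain ⟨c, hc⟩ := IH q hqd
    refine ⟨Function.update c m (p.coeff m), ?_⟩
    rw [Finset.sum_range_succ]
    have hcongr : ∀ k ∈ Finset.range m,
        Polynomial.C (Function.update c m (p.coeff m) k) * T k = Polynomial.C (c k) * T k := by
      intro k hk
      rw [Function.update_of_ne (Finset.mem_range.mp hk).ne]
    rw [Finset.sum_congr rfl hcongr, ← hc, Function.update_self, hq]
    ring

end LSAux

/-- Existence and uniqueness of the connexion coefficients expressing `Q_{n,r}` as a
combination of monic Laguerre polynomials with parameter `α + r + 1`. -/
theorem laguerre_sobolev_connexion_formula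
    (α : ℝ) (hα : -1 < α)
    (L : ℝ → ℕ → Polynomial ℝ)
    (hLmonic : ∀ β : ℝ, -1 < β → ∀ n : ℕ, (L β n).Monic ∧ (L β n).natDegree = n)
    (hLorth : ∀ β : ℝ, -1 < β → ∀ n : ℕ, ∀ p : Polynomial ℝ, p.degree < (n : WithBot ℕ) →
      ∫ x in Set.Ioi (0:ℝ), (L β n).eval x * p.eval x * x ^ β * Real.exp (-x) = 0)
    (r : ℕ) (M : ℕ → ℝ) (hM : ∀ i, i ≤ r → 0 < M i)
    (Q : ℕ → Polynomial ℝ)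
    (hQmonic : ∀ n : ℕ, (Q n).Monic ∧ (Q n).natDegree = n)
    (hQorth : ∀ n : ℕ, ∀ p : Polynomial ℝ, p.degree < (n : WithBot ℕ) →
      (1 / Real.Gamma (α + 1)) *
          ∫ x in Set.Ioi (0:ℝ), (Q n).eval x * p.eval x * x ^ α * Real.exp (-x)
        + ∑ i ∈ Finset.range (r + 1),
            M i * (Polynomial.derivative^[i] (Q n)).eval 0 *
              (Polynomial.derivative^[i] p).eval 0 = 0) :
    ∀ n : ℕ, r + 1 ≤ n →
      ∃! a : Fin (r + 2) → ℝ, a 0 = 1 ∧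
        Q n = ∑ j : Fin (r + 2), Polynomial.C (a j) * L (α + r + 1) (n - (j : ℕ)) := by
  intro n hn
  have hrn : (0:ℝ) ≤ r := Nat.cast_nonneg r
  have hβ : -1 < α + (r:ℝ) + 1 := by linarith
  set β : ℝ := α + r + 1 with hβdef
  have hLm : ∀ m, (L β m).Monic := fun m => (hLmonic β hβ m).1
  have hLd : ∀ m, (L β m).natDegree = m := fun m => (hLmonic β hβ m).2
  have hLne : ∀ m, L β m ≠ 0 := fun m => (hLm m).ne_zero
  have hLdeg : ∀ m, (L β m).degree = (m : WithBot ℕ) := fun m => by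
    rw [Polynomial.degree_eq_natDegree (hLne m), hLd m]
  have hLcoeff : ∀ m, (L β m).coeff m = 1 := fun m => by
    have h := (hLm m).coeff_natDegree
    rwa [hLd m] at h
  have hLo : ∀ (m : ℕ) (p : Polynomial ℝ), p.degree < (m : WithBot ℕ) →
      LSAux.Ip β (L β m) p = 0 := fun m p h => hLorth β hβ m p h
  have hLL : ∀ j k : ℕ, j < k → k ≤ n → LSAux.Ip β (L β (n - j)) (L β (n - k)) = 0 := by
    intro j k hjk hkn
    refine hLo (n - j) _ ?_
    rw [hLdeg]
    exact_mod_cast (by omega : n - k < n - j)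
  have hN : ∀ m, 0 < LSAux.Ip β (L β m) (L β m) := fun m => LSAux.Ip_pos β hβ _ (hLne m)
  -- Q n is orthogonal (w.r.t. weight β) to polynomials of degree < n - (r+1)
  have hQO : ∀ p : Polynomial ℝ, p.degree < ((n - (r + 1) : ℕ) : WithBot ℕ) →
      LSAux.Ip β (Q n) p = 0 := by
    intro p hp
    by_cases hp0 : p = 0
    · simp [LSAux.Ip, hp0]
    set q : Polynomial ℝ := p * Polynomial.X ^ (r + 1) with hqdef
    have hX : (Polynomial.X : Polynomial ℝ) ^ (r+1) ≠ 0 := pow_ne_zero _ Polynomial.X_ne_zero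
    have hq0 : q ≠ 0 := mul_ne_zero hp0 hX
    have hqd : q.natDegree = p.natDegree + (r + 1) := by
      rw [hqdef, Polynomial.natDegree_mul hp0 hX, Polynomial.natDegree_X_pow]
    have hpd : p.natDegree < n - (r + 1) := (Polynomial.natDegree_lt_iff_degree_lt hp0).mpr hp
    have hqdeg : q.degree < (n : WithBot ℕ) := by
      rw [← Polynomial.natDegree_lt_iff_degree_lt hq0]
      omega
    have hder : ∀ i, i ≤ r → (Polynomial.derivative^[i] q).eval 0 = 0 := by
      intro i hi
      rw [← Polynomial.coeff_zero_eq_eval_zero, Polynomial.coeff_iterate_derivative]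
      have hc : q.coeff (0 + i) = 0 := by
        rw [zero_add, hqdef, Polynomial.coeff_mul_X_pow', if_neg (by omega)]
      rw [hc, smul_zero]
    have h0 := hQorth n q hqdeg
    have hsum : ∑ i ∈ Finset.range (r + 1),
        M i * (Polynomial.derivative^[i] (Q n)).eval 0 *
          (Polynomial.derivative^[i] q).eval 0 = 0 :=
      Finset.sum_eq_zero fun i hi => by
        rw [hder i (Nat.lt_succ_iff.mp (Finset.mem_range.mp hi)), mul_zero]
    rw [hsum] at h0
    simp only [add_zero] at h0
    have hΓ : (0:ℝ) < Real.Gamma (α + 1) := Real.Gamma_pos_of_pos (by linarith)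
    have hint : ∫ x in Set.Ioi (0:ℝ), (Q n).eval x * q.eval x * x ^ α * Real.exp (-x) = 0 := by
      rcases mul_eq_zero.mp h0 with h | h
      · exact absurd h (by positivity)
      · exact h
    have heq : LSAux.Ip β (Q n) p
        = ∫ x in Set.Ioi (0:ℝ), (Q n).eval x * q.eval x * x ^ α * Real.exp (-x) := by
      unfold LSAux.Ip
      refine setIntegral_congr_fun measurableSet_Ioi fun x hx => ?_
      have hx0 : (0:ℝ) < x := hx
      beta_reduce
      have hxe : q.eval x = p.eval x * x ^ (r + 1) := by
        rw [hqdef, Polynomial.eval_mul, Polynomial.eval_pow, Polynomial.eval_X]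
      have hrw : x ^ β = x ^ α * x ^ (r + 1) := by
        rw [hβdef, show α + (r:ℝ) + 1 = α + ((r + 1 : ℕ) : ℝ) by push_cast; ring,
          Real.rpow_add hx0, Real.rpow_natCast]
      rw [hxe, hrw]
      ring
    rw [heq]
    exact hint
  -- the connexion coefficients
  set a : Fin (r + 2) → ℝ := fun j => if j = 0 then (1:ℝ) else
    LSAux.Ip β (Q n) (L β (n - (j:ℕ))) /
      LSAux.Ip β (L β (n - (j:ℕ))) (L β (n - (j:ℕ))) with hadef
  have ha0 : a 0 = 1 := by simp [hadef]
  set S : Polynomial ℝ := ∑ j : Fin (r + 2), Polynomial.C (a j) * L β (n - (j:ℕ)) with hSdef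
  set D : Polynomial ℝ := Q n - S with hDdef
  -- D is orthogonal to every L β m, m < n
  have hDL : ∀ m : ℕ, m < n → LSAux.Ip β D (L β m) = 0 := by
    intro m hm
    have hexp : LSAux.Ip β D (L β m) = LSAux.Ip β (Q n) (L β m)
        - ∑ j : Fin (r + 2), a j * LSAux.Ip β (L β (n - (j:ℕ))) (L β m) := by
      rw [hDdef, LSAux.Ip_sub_left β hβ, hSdef]
      congr 1
      rw [LSAux.Ip_comm, LSAux.Ip_sum_right β hβ]
      exact Finset.sum_congr rfl fun j _ => by rw [LSAux.Ip_comm]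
    by_cases hcase : n - (r + 1) ≤ m
    · set j0 : ℕ := n - m with hj0def
      have hj1 : 1 ≤ j0 := by omega
      have hj2 : j0 ≤ r + 1 := by omega
      have hnm : n - j0 = m := by omega
      set jf : Fin (r + 2) := ⟨j0, by omega⟩ with hjfdef
      have hsum1 : ∑ j : Fin (r + 2), a j * LSAux.Ip β (L β (n - (j:ℕ))) (L β m)
          = a jf * LSAux.Ip β (L β (n - j0)) (L β m) := by
        refine Finset.sum_eq_single jf ?_ ?_
        · intro j _ hne
          have hval : (j:ℕ) ≠ j0 := fun h => hne (Fin.ext h)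
          have hz : LSAux.Ip β (L β (n - (j:ℕ))) (L β m) = 0 := by
            rw [← hnm]
            rcases lt_or_gt_of_ne hval with h | h
            · exact hLL (j:ℕ) j0 h (by omega)
            · rw [LSAux.Ip_comm]
              exact hLL j0 (j:ℕ) h (by omega)
          rw [hz, mul_zero]
        · intro h
          exact absurd (Finset.mem_univ _) h
      have hjf0 : jf ≠ 0 := by
        rw [hjfdef]
        intro h
        have := congrArg Fin.val h
        simp at this
        omega
      have hajf : a jf = LSAux.Ip β (Q n) (L β (n - j0)) /
          LSAux.Ip β (L β (n - j0)) (L β (n - j0)) := by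
        rw [hadef]
        simp only [if_neg hjf0]
        rfl
      rw [hexp, hsum1, hajf, ← hnm, div_mul_cancel₀ _ (hN (n - j0)).ne', sub_self]
    · push_neg at hcase
      have hQz : LSAux.Ip β (Q n) (L β m) = 0 := by
        refine hQO (L β m) ?_
        rw [hLdeg]
        exact_mod_cast hcase
      have hsz : ∑ j : Fin (r + 2), a j * LSAux.Ip β (L β (n - (j:ℕ))) (L β m) = 0 := by
        refine Finset.sum_eq_zero fun j _ => ?_
        have hz : LSAux.Ip β (L β (n - (j:ℕ))) (L β m) = 0 := by
          refine hLo (n - (j:ℕ)) _ ?_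
          rw [hLdeg]
          have hjlt : (j:ℕ) < r + 2 := j.isLt
          exact_mod_cast (by omega : m < n - (j:ℕ))
        rw [hz, mul_zero]
      rw [hexp, hQz, hsz, sub_self]
  -- D has degree < n
  have hDdeg : D.degree < (n : WithBot ℕ) := by
    rw [Polynomial.degree_lt_iff_coeff_zero]
    intro k hk
    rw [hDdef, Polynomial.coeff_sub, hSdef, Polynomial.finset_sum_coeff]
    rcases eq_or_lt_of_le hk with h | h
    · have h1 : (Q n).coeff k = 1 := by
        rw [← h]
        have hq := (hQmonic n).1.coeff_natDegree
        rwa [(hQmonic n).2] at hq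
      have h2 : ∑ j : Fin (r + 2), (Polynomial.C (a j) * L β (n - (j:ℕ))).coeff k = 1 := by
        rw [Finset.sum_eq_single (0 : Fin (r + 2))]
        · rw [Polynomial.coeff_C_mul, ha0, one_mul]
          simp only [Fin.val_zero, Nat.sub_zero]
          rw [← h, hLcoeff]
        · intro j _ hj
          have hjv : (j:ℕ) ≠ 0 := fun hv => hj (Fin.ext hv)
          have hz : (L β (n - (j:ℕ))).coeff k = 0 := by
            refine Polynomial.coeff_eq_zero_of_natDegree_lt ?_
            rw [hLd]
            omega
          rw [Polynomial.coeff_C_mul, hz, mul_zero]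
        · intro h
          exact absurd (Finset.mem_univ _) h
      rw [h1, h2, sub_self]
    · have h1 : (Q n).coeff k = 0 := by
        refine Polynomial.coeff_eq_zero_of_natDegree_lt ?_
        rw [(hQmonic n).2]
        exact h
      have h2 : ∑ j : Fin (r + 2), (Polynomial.C (a j) * L β (n - (j:ℕ))).coeff k = 0 := by
        refine Finset.sum_eq_zero fun j _ => ?_
        have hz : (L β (n - (j:ℕ))).coeff k = 0 := by
          refine Polynomial.coeff_eq_zero_of_natDegree_lt ?_
          rw [hLd]
          omega
        rw [Polynomial.coeff_C_mul, hz, mul_zero]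
      rw [h1, h2, sub_self]
  -- conclude D = 0
  obtain ⟨c, hc⟩ := LSAux.span_monic (L β) (fun m => hLmonic β hβ m) n D hDdeg
  have hDD : LSAux.Ip β D D = 0 := by
    calc LSAux.Ip β D D
        = LSAux.Ip β D (∑ k ∈ Finset.range n, Polynomial.C (c k) * L β k) := by rw [← hc]
      _ = ∑ k ∈ Finset.range n, c k * LSAux.Ip β D (L β k) := LSAux.Ip_sum_right β hβ _ _ _ _
      _ = 0 := Finset.sum_eq_zero fun k hk => by
          rw [hDL k (Finset.mem_range.mp hk), mul_zero]
  have hD0 : D = 0 := by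
    by_contra h
    exact absurd hDD (LSAux.Ip_pos β hβ D h).ne'
  have hQsum : Q n = ∑ j : Fin (r + 2), Polynomial.C (a j) * L β (n - (j:ℕ)) := by
    rw [← hSdef, ← sub_eq_zero, ← hDdef]
    exact hD0
  refine ⟨a, ⟨ha0, hQsum⟩, ?_⟩
  intro b hb
  obtain ⟨hb0, hbsum⟩ := hb
  have hzero : ∑ j : Fin (r + 2), Polynomial.C (b j - a j) * L β (n - (j:ℕ)) = 0 := by
    calc ∑ j : Fin (r + 2), Polynomial.C (b j - a j) * L β (n - (j:ℕ))
        = ∑ j : Fin (r + 2), (Polynomial.C (b j) * L β (n - (j:ℕ))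
            - Polynomial.C (a j) * L β (n - (j:ℕ))) :=
          Finset.sum_congr rfl fun j _ => by rw [map_sub, sub_mul]
      _ = ∑ j : Fin (r + 2), Polynomial.C (b j) * L β (n - (j:ℕ))
            - ∑ j : Fin (r + 2), Polynomial.C (a j) * L β (n - (j:ℕ)) :=
          (Finset.sum_sub_distrib _ _)
      _ = 0 := by rw [← hbsum, ← hQsum, sub_self]
  have hkey : ∀ m : ℕ, ∀ j : Fin (r + 2), (j:ℕ) = m → b j = a j := by
    intro m
    induction m using Nat.strong_induction_on with
    | _ m IH =>
      intro j hj
      have hcoe := congrArg (fun p : Polynomial ℝ => p.coeff (n - m)) hzero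
      simp only [Polynomial.finset_sum_coeff, Polynomial.coeff_C_mul,
        Polynomial.coeff_zero] at hcoe
      rw [Finset.sum_eq_single j] at hcoe
      · have h1 : (L β (n - (j:ℕ))).coeff (n - m) = 1 := by
          rw [hj, hLcoeff]
        rw [h1, mul_one] at hcoe
        linarith [hcoe]
      · intro i _ hij
        have hiv : (i:ℕ) ≠ m := by
          rw [← hj]
          exact fun hv => hij (Fin.ext hv)
        rcases lt_or_gt_of_ne hiv with h | h
        · rw [sub_eq_zero.mpr (IH (i:ℕ) h i rfl), zero_mul]
        · have hz : (L β (n - (i:ℕ))).coeff (n - m) = 0 := by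
            refine Polynomial.coeff_eq_zero_of_natDegree_lt ?_
            rw [hLd]
            have hjlt : (j:ℕ) < r + 2 := j.isLt
            have hilt : (i:ℕ) < r + 2 := i.isLt
            omega
          rw [hz, mul_zero]
      · intro h
        exact absurd (Finset.mem_univ _) h
  funext j
  exact hkey (j:ℕ) j rfl
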